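/- arXiv:2303.05754 — 7 statements merged into one kernel-verified Lean document; each statement's English description precedes it below -/
import Mathlib

section
/- Let μ be a probability measure on E := EuclideanSpace ℝ (Fin d), and let s > 0, σ > 0. Define the smoothed density p : E → ℝ by p(x) = ∫ (2πσ²)^(−d/2) · exp(−‖x − s•x₀‖²/(2σ²)) dμ(x₀) and the vector-valued integral m : E → E by m(x) = ∫ (2πσ²)^(−d/2) · exp(−‖x − s•x₀‖²/(2σ²)) • x₀ dμ(x₀). Then p is differentiable at every x ∈ E with gradient ∇p(x) = (1/σ²) • (s • m(x) − p(x) • x); consequently, at every x with p(x) > 0, the posterior mean m(x)/p(x) equals (1/s) • (x + (σ²/p(x)) • ∇p(x)) (Tweedie's formula). -/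
open MeasureTheory Real

section aux

variable {d : ℕ}

local notation "E" => EuclideanSpace ℝ (Fin d)

/-- `t * exp (-t^2/(2σ^2)) ≤ σ` for `t ≥ 0`. -/
lemma tweedie_aux_bound {σ : ℝ} (hσ : 0 < σ) {t : ℝ} (ht : 0 ≤ t) :
    t * Real.exp (-t ^ 2 / (2 * σ ^ 2)) ≤ σ := by
  have h := Real.add_one_le_exp (t ^ 2 / (2 * σ ^ 2))
  have he : 0 < Real.exp (t ^ 2 / (2 * σ ^ 2)) := Real.exp_pos _
  rw [neg_div, Real.exp_neg, mul_inv_le_iff₀' he]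
  have h3 : (t ^ 2 / (2 * σ ^ 2) + 1) * (2 * σ ^ 2) ≤
      Real.exp (t ^ 2 / (2 * σ ^ 2)) * (2 * σ ^ 2) :=
    mul_le_mul_of_nonneg_right h (by positivity)
  have h4 : (t ^ 2 / (2 * σ ^ 2) + 1) * (2 * σ ^ 2) = t ^ 2 + 2 * σ ^ 2 := by
    field_simp
  rw [h4] at h3
  have h5 : 2 * σ * t ≤ 2 * σ * (Real.exp (t ^ 2 / (2 * σ ^ 2)) * σ) := by
    nlinarith [sq_nonneg (t - σ)]
  exact le_of_mul_le_mul_left h5 (by positivity)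

/-- Pointwise derivative of the Gaussian kernel. -/
lemma tweedie_aux_deriv (c σ : ℝ) (hσ : 0 < σ) (v y : E) :
    HasFDerivAt (fun z : E => c * Real.exp (-‖z - v‖ ^ 2 / (2 * σ ^ 2)))
      (innerSL ℝ ((-(c * Real.exp (-‖y - v‖ ^ 2 / (2 * σ ^ 2))) / σ ^ 2) • (y - v))) y := by
  have h1 : HasFDerivAt (fun z : E => z - v) (ContinuousLinearMap.id ℝ E) y :=
    (hasFDerivAt_id y).sub_const v
  have h2 : HasFDerivAt (fun z : E => ‖z - v‖ ^ 2)
      ((2 • (innerSL ℝ (y - v))).comp (ContinuousLinearMap.id ℝ E)) y := h1.norm_sq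
  have heq : (fun z : E => -‖z - v‖ ^ 2 / (2 * σ ^ 2))
      = fun z : E => (-(1 / (2 * σ ^ 2))) * ‖z - v‖ ^ 2 := by
    funext z; ring
  have h3 : HasFDerivAt (fun z : E => -‖z - v‖ ^ 2 / (2 * σ ^ 2))
      ((-(1 / (2 * σ ^ 2))) • ((2 • (innerSL ℝ (y - v))).comp (ContinuousLinearMap.id ℝ E))) y := by
    rw [heq]; exact h2.const_mul _
  have h5 := h3.exp.const_mul c
  refine h5.congr_fderiv ?_
  ext w
  have hσ2 : (σ : ℝ) ^ 2 ≠ 0 := by positivity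
  simp only [innerSL_apply_apply, ContinuousLinearMap.smul_apply, ContinuousLinearMap.comp_apply,
    ContinuousLinearMap.id_apply, ContinuousLinearMap.smul_apply, smul_eq_mul,
    real_inner_smul_left]
  field_simp
  ring

end aux

/-- Tweedie's formula.  Let `μ` be a probability measure on `E = EuclideanSpace ℝ (Fin d)`,
`s > 0` a scale factor and `σ > 0` a noise level.  Define the smoothed density
`p x = ∫ (2πσ²)^(−d/2) exp(−‖x − s•x₀‖²/(2σ²)) dμ(x₀)` and the vector-valued integral
`m x = ∫ (2πσ²)^(−d/2) exp(−‖x − s•x₀‖²/(2σ²)) • x₀ dμ(x₀)`.  Then `p` is differentiable at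
every `x` with gradient `∇p(x) = (1/σ²) • (s • m x − p x • x)`, and whenever `p x > 0` the
posterior mean `m x / p x` equals `(1/s) • (x + (σ²/p x) • ∇p(x))`. -/
theorem tweedie_formula
    {d : ℕ} (μ : Measure (EuclideanSpace ℝ (Fin d))) [IsProbabilityMeasure μ]
    (s σ : ℝ) (hs : 0 < s) (hσ : 0 < σ)
    (p : EuclideanSpace ℝ (Fin d) → ℝ)
    (m : EuclideanSpace ℝ (Fin d) → EuclideanSpace ℝ (Fin d))
    (hp : ∀ x, p x = ∫ x₀,
      (2 * π * σ ^ 2) ^ (-(d : ℝ) / 2) * Real.exp (-‖x - s • x₀‖ ^ 2 / (2 * σ ^ 2)) ∂μ)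
    (hm : ∀ x, m x = ∫ x₀,
      ((2 * π * σ ^ 2) ^ (-(d : ℝ) / 2) * Real.exp (-‖x - s • x₀‖ ^ 2 / (2 * σ ^ 2))) • x₀ ∂μ) :
    ∀ x, HasGradientAt p ((1 / σ ^ 2) • (s • m x - p x • x)) x ∧
      (0 < p x → (p x)⁻¹ • m x
        = (1 / s) • (x + (σ ^ 2 / p x) • ((1 / σ ^ 2) • (s • m x - p x • x)))) := by
  set c : ℝ := (2 * π * σ ^ 2) ^ (-(d : ℝ) / 2) with hc
  have hc_pos : 0 < c := Real.rpow_pos_of_pos (by positivity) _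
  have hσ2 : (σ : ℝ) ^ 2 ≠ 0 := by positivity
  set f : EuclideanSpace ℝ (Fin d) → EuclideanSpace ℝ (Fin d) → ℝ := fun y a => c * Real.exp (-‖y - s • a‖ ^ 2 / (2 * σ ^ 2)) with hf
  have hf_pos : ∀ y a, 0 < f y a := fun y a => by positivity
  have hf_le : ∀ y a, f y a ≤ c := fun y a => by
    have h1 : Real.exp (-‖y - s • a‖ ^ 2 / (2 * σ ^ 2)) ≤ 1 := by
      apply Real.exp_le_one_iff.mpr
      rw [neg_div, Left.neg_nonpos_iff]
      positivity
    calc c * Real.exp _ ≤ c * 1 := mul_le_mul_of_nonneg_left h1 hc_pos.le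
      _ = c := mul_one c
  have hf_cont : ∀ y, Continuous (fun a : EuclideanSpace ℝ (Fin d) => f y a) := by
    intro y
    apply Continuous.mul continuous_const
    apply Real.continuous_exp.comp
    fun_prop
  have hf_int : ∀ y, Integrable (fun a : EuclideanSpace ℝ (Fin d) => f y a) μ := by
    intro y
    apply Integrable.mono' (integrable_const c) (hf_cont y).aestronglyMeasurable
    filter_upwards with a
    rw [Real.norm_eq_abs, abs_of_pos (hf_pos y a)]
    exact hf_le y a
  have hkey : ∀ (y a : EuclideanSpace ℝ (Fin d)), f y a * ‖y - s • a‖ ≤ c * σ := by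
    intro y a
    have h := tweedie_aux_bound hσ (norm_nonneg (y - s • a))
    calc f y a * ‖y - s • a‖
        = c * (‖y - s • a‖ * Real.exp (-‖y - s • a‖ ^ 2 / (2 * σ ^ 2))) := by ring
      _ ≤ c * σ := mul_le_mul_of_nonneg_left h hc_pos.le
  have hfa_int : ∀ y, Integrable (fun a : EuclideanSpace ℝ (Fin d) => f y a • a) μ := by
    intro y
    have hcont : Continuous (fun a : EuclideanSpace ℝ (Fin d) => f y a • a) := (hf_cont y).smul continuous_id
    apply Integrable.mono' (integrable_const ((c * σ + c * ‖y‖) / s)) hcont.aestronglyMeasurable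
    filter_upwards with a
    rw [norm_smul, Real.norm_eq_abs, abs_of_pos (hf_pos y a)]
    have h1 : s * ‖a‖ ≤ ‖y - s • a‖ + ‖y‖ := by
      calc s * ‖a‖ = ‖s • a‖ := by rw [norm_smul, Real.norm_eq_abs, abs_of_pos hs]
        _ = ‖y - (y - s • a)‖ := by rw [sub_sub_cancel]
        _ ≤ ‖y‖ + ‖y - s • a‖ := norm_sub_le _ _
        _ = ‖y - s • a‖ + ‖y‖ := by ring
    have h2 : f y a * (s * ‖a‖) ≤ c * σ + c * ‖y‖ := by
      calc f y a * (s * ‖a‖) ≤ f y a * (‖y - s • a‖ + ‖y‖) :=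
            mul_le_mul_of_nonneg_left h1 (hf_pos y a).le
        _ = f y a * ‖y - s • a‖ + f y a * ‖y‖ := mul_add _ _ _
        _ ≤ c * σ + c * ‖y‖ := add_le_add (hkey y a)
            (mul_le_mul_of_nonneg_right (hf_le y a) (norm_nonneg y))
    have h3 : f y a * ‖a‖ = f y a * (s * ‖a‖) / s := by field_simp
    rw [h3]
    gcongr
  intro x
  -- the derivative integrand
  set w : EuclideanSpace ℝ (Fin d) → EuclideanSpace ℝ (Fin d) := fun a => (-(f x a) / σ ^ 2) • (x - s • a) with hw
  have hw_cont : Continuous w := by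
    apply Continuous.fun_smul
    · exact ((hf_cont x).neg.div_const _)
    · exact continuous_const.sub (continuous_const.fun_smul continuous_id)
  have hw_int : Integrable w μ := by
    apply Integrable.mono' (integrable_const (c / σ)) hw_cont.aestronglyMeasurable
    filter_upwards with a
    rw [hw, norm_smul, Real.norm_eq_abs, abs_div, abs_neg, abs_of_pos (hf_pos x a),
      abs_of_pos (by positivity : (0:ℝ) < σ ^ 2)]
    rw [div_mul_eq_mul_div, div_le_div_iff₀ (by positivity) hσ]
    calc f x a * ‖x - s • a‖ * σ ≤ c * σ * σ :=
          mul_le_mul_of_nonneg_right (hkey x a) hσ.le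
      _ = c * σ ^ 2 := by ring
  -- the Fréchet derivative via dominated differentiation
  have hfd : HasFDerivAt (fun y => ∫ a, f y a ∂μ) (∫ a, innerSL ℝ (((-(f x a)) / σ ^ 2) • (x - s • a)) ∂μ) x := by
    apply hasFDerivAt_integral_of_dominated_of_fderiv_le
      (F' := fun y a => innerSL ℝ (((-(f y a)) / σ ^ 2) • (y - s • a)))
      (bound := fun _ => c / σ) (Metric.ball_mem_nhds x one_pos)
    · exact Filter.Eventually.of_forall fun y => (hf_cont y).aestronglyMeasurable
    · exact hf_int x
    · exact ((innerSL ℝ).continuous.comp hw_cont).aestronglyMeasurable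
    · filter_upwards with a y _
      rw [innerSL_apply_norm, norm_smul, Real.norm_eq_abs, abs_div, abs_neg,
        abs_of_pos (hf_pos y a), abs_of_pos (by positivity : (0:ℝ) < σ ^ 2)]
      rw [div_mul_eq_mul_div, div_le_div_iff₀ (by positivity) hσ]
      calc f y a * ‖y - s • a‖ * σ ≤ c * σ * σ :=
            mul_le_mul_of_nonneg_right (hkey y a) hσ.le
        _ = c * σ ^ 2 := by ring
    · exact integrable_const _
    · filter_upwards with a y _
      exact tweedie_aux_deriv c σ hσ (s • a) y
  -- identify the integral of the derivative
  have hInt : (∫ a, innerSL ℝ (((-(f x a)) / σ ^ 2) • (x - s • a)) ∂μ)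
      = innerSL ℝ (∫ a, w a ∂μ) := by
    exact ContinuousLinearMap.integral_comp_comm (innerSL ℝ) hw_int
  have hw_eq : (∫ a, w a ∂μ) = (1 / σ ^ 2) • (s • m x - p x • x) := by
    have hsplit : ∀ a : EuclideanSpace ℝ (Fin d), w a = (s / σ ^ 2) • (f x a • a) + (f x a) • ((-(1:ℝ) / σ ^ 2) • x) := by
      intro a
      rw [hw]
      simp only [smul_smul, smul_sub, sub_eq_add_neg]
      rw [← add_comm]
      module
    have hA : Integrable (fun a => (s / σ ^ 2) • (f x a • a)) μ := (hfa_int x).fun_smul _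
    have hB : Integrable (fun a => (f x a) • ((-(1:ℝ) / σ ^ 2) • x)) μ := (hf_int x).smul_const _
    calc (∫ a, w a ∂μ)
        = ∫ a, ((s / σ ^ 2) • (f x a • a) + (f x a) • ((-(1:ℝ) / σ ^ 2) • x)) ∂μ := by
          exact integral_congr_ae (Filter.Eventually.of_forall hsplit)
      _ = (∫ a, (s / σ ^ 2) • (f x a • a) ∂μ) + ∫ a, (f x a) • ((-(1:ℝ) / σ ^ 2) • x) ∂μ :=
          integral_add hA hB
      _ = (s / σ ^ 2) • (∫ a, f x a • a ∂μ) + (∫ a, f x a ∂μ) • ((-(1:ℝ) / σ ^ 2) • x) := by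
          rw [integral_smul, integral_smul_const]
      _ = (1 / σ ^ 2) • (s • m x - p x • x) := by
          rw [← hm x, ← hp x]
          module
  have hgrad : HasGradientAt p ((1 / σ ^ 2) • (s • m x - p x • x)) x := by
    have hp' : p = fun y => ∫ a, f y a ∂μ := funext hp
    have hdual : (InnerProductSpace.toDual ℝ (EuclideanSpace ℝ (Fin d)))
        ((1 / σ ^ 2) • (s • m x - p x • x))
        = ∫ a, innerSL ℝ (((-(f x a)) / σ ^ 2) • (x - s • a)) ∂μ := by
      rw [hInt, hw_eq]
      ext y
      rw [InnerProductSpace.toDual_apply_apply, innerSL_apply_apply]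
    have hfd' : HasFDerivAt p
        (∫ a, innerSL ℝ (((-(f x a)) / σ ^ 2) • (x - s • a)) ∂μ) x := by
      rw [hp']; exact hfd
    rw [hasGradientAt_iff_hasFDerivAt, hdual]
    exact hfd'
  refine ⟨hgrad, fun hpx => ?_⟩
  have hpx' : p x ≠ 0 := ne_of_gt hpx
  match_scalars
  · field_simp
  · field_simp
    ring
end

section
/- Let ι : EuclideanSpace ℝ (Fin l) → EuclideanSpace ℝ (Fin d) be a linear isometry, let K be the range of ι, and let P be the orthogonal projection onto K. Let ᾱ ∈ (0,1), σ > 0, and set s := (1/σ² + ᾱ/(1−ᾱ))⁻¹ and c := 1/(1 + ᾱσ²/(1−ᾱ)). Then for every x ∈ EuclideanSpace ℝ (Fin d), ∫_{z ∈ ℝ^l} exp(−(‖x − √ᾱ • ι(z)‖²/(2(1−ᾱ)) + ‖z‖²/(2σ²))) dz = (2πs)^(l/2) · exp(−(‖x − P x‖² + c·‖P x‖²)/(2(1−ᾱ))), where the integral is with respect to Lebesgue measure on EuclideanSpace ℝ (Fin l). -/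
open MeasureTheory Real

/-- Gaussian marginal over an `l`-dimensional subspace (proof of Proposition 1).
`ι` is a linear isometry parametrizing the subspace `K = range ι`, `P` is the orthogonal
projection onto `K`, `s = (1/σ² + ᾱ/(1−ᾱ))⁻¹`, `c = 1/(1 + ᾱσ²/(1−ᾱ))`.  Then
`∫ exp(−(‖x − √ᾱ•ι(z)‖²/(2(1−ᾱ)) + ‖z‖²/(2σ²))) dz
  = (2πs)^(l/2) exp(−(‖x − Px‖² + c‖Px‖²)/(2(1−ᾱ)))`. -/
theorem gaussian_marginal_subspace
    {l d : ℕ} (ι : EuclideanSpace ℝ (Fin l) →ₗᵢ[ℝ] EuclideanSpace ℝ (Fin d))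
    (K : Submodule ℝ (EuclideanSpace ℝ (Fin d)))
    (hK : K = LinearMap.range ι.toLinearMap)
    (P : EuclideanSpace ℝ (Fin d) →ₗ[ℝ] EuclideanSpace ℝ (Fin d))
    (hPmem : ∀ x, P x ∈ K)
    (hPorth : ∀ x, ∀ v ∈ K, inner ℝ (x - P x) v = (0 : ℝ))
    (abar σ : ℝ) (habar : abar ∈ Set.Ioo (0:ℝ) 1) (hσ : 0 < σ)
    (s c : ℝ)
    (hs : s = (1 / σ ^ 2 + abar / (1 - abar))⁻¹)
    (hc : c = 1 / (1 + abar * σ ^ 2 / (1 - abar))) :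
    ∀ x : EuclideanSpace ℝ (Fin d),
      (∫ z : EuclideanSpace ℝ (Fin l),
          Real.exp (-(‖x - Real.sqrt abar • ι z‖ ^ 2 / (2 * (1 - abar))
            + ‖z‖ ^ 2 / (2 * σ ^ 2))))
        = (2 * π * s) ^ ((l : ℝ) / 2)
          * Real.exp (-(‖x - P x‖ ^ 2 + c * ‖P x‖ ^ 2) / (2 * (1 - abar))) := by
  intro x
  obtain ⟨hα0, hα1⟩ := habar
  have h1α : (0:ℝ) < 1 - abar := by linarith
  have hσ2 : (0:ℝ) < σ ^ 2 := by positivity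
  obtain ⟨w, hw⟩ : ∃ w, ι w = P x := by
    have := hPmem x
    rw [hK] at this
    exact this
  set a : ℝ := 1 / σ ^ 2 + abar / (1 - abar) with ha_def
  have ha : 0 < a := by positivity
  set m : EuclideanSpace ℝ (Fin l) := (Real.sqrt abar / (a * (1 - abar))) • w with hm_def
  have hsqrt : Real.sqrt abar ^ 2 = abar := Real.sq_sqrt hα0.le
  -- inner product identity
  have hinner : ∀ z : EuclideanSpace ℝ (Fin l),
      (inner ℝ x (ι z) : ℝ) = inner ℝ w z := by
    intro z
    have hzK : ι z ∈ K := by rw [hK]; exact ⟨z, rfl⟩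
    have h0 : (inner ℝ (x - P x) (ι z) : ℝ) = 0 := hPorth x _ hzK
    have h1 : (inner ℝ x (ι z) : ℝ) = inner ℝ (P x) (ι z) := by
      have := inner_sub_left (𝕜 := ℝ) x (P x) (ι z)
      rw [h0] at this
      linarith [this]
    rw [h1, ← hw, ι.inner_map_map]
  -- pointwise rewrite of the exponent
  set C : ℝ := a / 2 * ‖m‖ ^ 2 - ‖x‖ ^ 2 / (2 * (1 - abar)) with hC_def
  have key : ∀ z : EuclideanSpace ℝ (Fin l),
      -(‖x - Real.sqrt abar • ι z‖ ^ 2 / (2 * (1 - abar)) + ‖z‖ ^ 2 / (2 * σ ^ 2))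
        = -(a / 2) * ‖z - m‖ ^ 2 + C := by
    intro z
    have e1 : ‖x - Real.sqrt abar • ι z‖ ^ 2
        = ‖x‖ ^ 2 - 2 * (Real.sqrt abar * inner ℝ w z) + abar * ‖z‖ ^ 2 := by
      rw [norm_sub_sq_real, real_inner_smul_right, hinner z, norm_smul, mul_pow,
        ι.norm_map]
      simp [Real.norm_eq_abs, abs_of_nonneg (Real.sqrt_nonneg abar), hsqrt]
    have e2 : ‖z - m‖ ^ 2 = ‖z‖ ^ 2 - 2 * (Real.sqrt abar / (a * (1 - abar)) * inner ℝ w z)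
        + ‖m‖ ^ 2 := by
      rw [norm_sub_sq_real, hm_def, real_inner_smul_right, real_inner_comm z w]
    rw [e1, e2, hC_def]
    have ha' : a ≠ 0 := ne_of_gt ha
    have h1α' : (1 - abar) ≠ 0 := ne_of_gt h1α
    have hσ' : σ ≠ 0 := ne_of_gt hσ
    generalize (inner ℝ w z : ℝ) = ip
    generalize ‖x‖ ^ 2 = nx
    generalize ‖z‖ ^ 2 = nz
    generalize ‖m‖ ^ 2 = nm
    rw [ha_def]
    field_simp
    ring
  simp_rw [key, Real.exp_add]
  rw [integral_mul_const]
  have htrans : (∫ z : EuclideanSpace ℝ (Fin l), Real.exp (-(a / 2) * ‖z - m‖ ^ 2))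
      = ∫ z : EuclideanSpace ℝ (Fin l), Real.exp (-(a / 2) * ‖z‖ ^ 2) :=
    integral_sub_right_eq_self (fun z => Real.exp (-(a / 2) * ‖z‖ ^ 2)) m
  rw [htrans, GaussianFourier.integral_rexp_neg_mul_sq_norm (by positivity : (0:ℝ) < a / 2)]
  have hfr : (Module.finrank ℝ (EuclideanSpace ℝ (Fin l)) : ℝ) = (l : ℝ) := by
    rw [finrank_euclideanSpace_fin]
  rw [hfr]
  have hbase : π / (a / 2) = 2 * π * s := by
    rw [hs]
    field_simp
  rw [hbase]
  congr 1
  -- now show C equals the target exponent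
  have hwnorm : ‖w‖ = ‖P x‖ := by rw [← hw, ι.norm_map]
  have hpyth : ‖x‖ ^ 2 = ‖x - P x‖ ^ 2 + ‖P x‖ ^ 2 := by
    have h0 : (inner ℝ (x - P x) (P x) : ℝ) = 0 := hPorth x _ (hPmem x)
    have := norm_add_sq_real (x - P x) (P x)
    rw [h0] at this
    simpa using this
  rw [hC_def, hm_def, norm_smul, mul_pow]
  simp only [Real.norm_eq_abs, sq_abs]
  rw [hwnorm, hpyth, hc]
  have hden : (0:ℝ) < 1 + abar * σ ^ 2 / (1 - abar) := by positivity
  have ha' : a ≠ 0 := ne_of_gt ha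
  have haval : a = (1 - abar + abar * σ ^ 2) / (σ ^ 2 * (1 - abar)) := by
    rw [ha_def]; field_simp
  have h1α' : (1 - abar) ≠ 0 := ne_of_gt h1α
  have hσ' : σ ≠ 0 := ne_of_gt hσ
  have hD : (1 - abar + abar * σ ^ 2) ≠ 0 := by nlinarith
  rw [div_pow, hsqrt, haval]
  field_simp
  ring
end

section
/- Let ι : EuclideanSpace ℝ (Fin l) → EuclideanSpace ℝ (Fin d) be a linear isometry, let K be the range of ι, and let P be the orthogonal projection onto K. Let ᾱ ∈ (0,1), σ > 0, and set c := 1/(1 + ᾱσ²/(1−ᾱ)). Define p_σ(x) := ∫_{z ∈ ℝ^l} exp(−(‖x − √ᾱ • ι(z)‖²/(2(1−ᾱ)) + ‖z‖²/(2σ²))) dz. Then p_σ is everywhere positive and differentiable, and its log-gradient satisfies ∇ log p_σ(x) = −(1/(1−ᾱ)) • (x − P x) − (c/(1−ᾱ)) • P x for every x ∈ EuclideanSpace ℝ (Fin d). -/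
open MeasureTheory Real

lemma score_aux_scalar (A σ a c s ab X W I Z : ℝ) (hA : A ≠ 0) (hσ : σ ≠ 0)
    (hs2 : s ^ 2 = ab) (ha : a = ab / A + 1 / σ ^ 2)
    (hden : A + ab * σ ^ 2 ≠ 0)
    (hc : c = 1 / (1 + ab * σ ^ 2 / A)) :
    (X + (W - 2 * s * I + s ^ 2 * Z)) / (2 * A) + Z / (2 * σ ^ 2) =
      (X / (2 * A) + c * W / (2 * A)) +
        (a / 2) * (Z - 2 * (s / (A * a)) * I + (s / (A * a)) ^ 2 * W) := by
  subst hs2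
  have hσ2 : σ ^ 2 ≠ 0 := pow_ne_zero _ hσ
  have ha' : a = (A + s ^ 2 * σ ^ 2) / (A * σ ^ 2) := by rw [ha]; field_simp; ring
  have hc' : c = A / (A + s ^ 2 * σ ^ 2) := by
    rw [hc]; rw [show 1 + s ^ 2 * σ ^ 2 / A = (A + s ^ 2 * σ ^ 2) / A by field_simp]
    rw [one_div_div]
  have he : s / (A * a) = s * σ ^ 2 / (A + s ^ 2 * σ ^ 2) := by
    rw [ha']; field_simp
  rw [hc', he, ha']
  field_simp
  ring

lemma score_aux_scalar2 (A c t1 t2 : ℝ) (hA : A ≠ 0) :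
    0 + -((2 * A)⁻¹ * (2 * t1) + (2 * A)⁻¹ * (c * (2 * t2)))
      = -(1 / A) * t1 - c / A * t2 := by
  field_simp
  ring

/-- Score of the marginal density under a Gaussian-on-subspace prior (proof of
Proposition 1).  `ι` parametrizes the subspace `K = range ι`, `P` is the orthogonal
projection onto `K`, `c = 1/(1 + ᾱσ²/(1−ᾱ))`, and
`p_σ(x) = ∫ exp(−(‖x − √ᾱ•ι(z)‖²/(2(1−ᾱ)) + ‖z‖²/(2σ²))) dz`.  Then `p_σ` is everywhere
positive and differentiable and
`∇ log p_σ(x) = −(1/(1−ᾱ))•(x − Px) − (c/(1−ᾱ))•Px`. -/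
theorem score_gaussian_on_subspace
    {l d : ℕ} (ι : EuclideanSpace ℝ (Fin l) →ₗᵢ[ℝ] EuclideanSpace ℝ (Fin d))
    (K : Submodule ℝ (EuclideanSpace ℝ (Fin d)))
    (hK : K = LinearMap.range ι.toLinearMap)
    (P : EuclideanSpace ℝ (Fin d) →ₗ[ℝ] EuclideanSpace ℝ (Fin d))
    (hPmem : ∀ x, P x ∈ K)
    (hPorth : ∀ x, ∀ v ∈ K, inner ℝ (x - P x) v = (0 : ℝ))
    (abar σ : ℝ) (habar : abar ∈ Set.Ioo (0:ℝ) 1) (hσ : 0 < σ)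
    (c : ℝ) (hc : c = 1 / (1 + abar * σ ^ 2 / (1 - abar)))
    (p : EuclideanSpace ℝ (Fin d) → ℝ)
    (hp : ∀ x, p x = ∫ z : EuclideanSpace ℝ (Fin l),
      Real.exp (-(‖x - Real.sqrt abar • ι z‖ ^ 2 / (2 * (1 - abar))
        + ‖z‖ ^ 2 / (2 * σ ^ 2)))) :
    (∀ x, 0 < p x) ∧ Differentiable ℝ p ∧
      ∀ x, HasGradientAt (fun y => Real.log (p y))
        (-(1 / (1 - abar)) • (x - P x) - (c / (1 - abar)) • P x) x := by
  obtain ⟨hab0, hab1⟩ := habar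
  set A : ℝ := 1 - abar with hA
  have hA0 : 0 < A := by simp only [hA]; linarith
  have hσ2 : (0:ℝ) < σ ^ 2 := by positivity
  set a : ℝ := abar / A + 1 / σ ^ 2 with ha
  have ha0 : 0 < a := by positivity
  set s : ℝ := Real.sqrt abar with hs
  have hs2 : s ^ 2 = abar := Real.sq_sqrt hab0.le
  set C : ℝ := ∫ u : EuclideanSpace ℝ (Fin l), Real.exp (-(a / 2) * ‖u‖ ^ 2) with hC
  have hC0 : 0 < C := by
    rw [hC, GaussianFourier.integral_rexp_neg_mul_sq_norm (by positivity : (0:ℝ) < a / 2)]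
    positivity
  have key : ∀ x, p x = C * Real.exp
      (-(‖x - P x‖ ^ 2 / (2 * A) + c * ‖P x‖ ^ 2 / (2 * A))) := by
    intro x
    obtain ⟨w, hw⟩ : ∃ w, ι w = P x := by
      have := hPmem x; rw [hK] at this; exact this
    set m : EuclideanSpace ℝ (Fin l) := (s / (A * a)) • w with hm
    have hptwise : ∀ z : EuclideanSpace ℝ (Fin l),
        ‖x - s • ι z‖ ^ 2 / (2 * A) + ‖z‖ ^ 2 / (2 * σ ^ 2)
          = (‖x - P x‖ ^ 2 / (2 * A) + c * ‖P x‖ ^ 2 / (2 * A))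
            + (a / 2) * ‖z - m‖ ^ 2 := by
      intro z
      have hKz : (s • ι z : EuclideanSpace ℝ (Fin d)) ∈ K := by
        rw [hK]; exact Submodule.smul_mem _ s ⟨z, rfl⟩
      have horth : ‖x - s • ι z‖ ^ 2 = ‖x - P x‖ ^ 2 + ‖w - s • z‖ ^ 2 := by
        have h1 : x - s • ι z = (x - P x) + (P x - s • ι z) := by abel
        have h2 : inner ℝ (x - P x) (P x - s • ι z) = (0:ℝ) :=
          hPorth x _ (Submodule.sub_mem _ (hPmem x) hKz)
        have h3 : ‖(P x : EuclideanSpace ℝ (Fin d)) - s • ι z‖ = ‖w - s • z‖ := by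
          rw [← hw, ← ι.map_smul, ← ι.map_sub, ι.norm_map]
        rw [h1, norm_add_sq_real, h2, h3]; ring
      have hwz : ‖w - s • z‖ ^ 2 = ‖w‖ ^ 2 - 2 * s * inner ℝ w z + s ^ 2 * ‖z‖ ^ 2 := by
        rw [norm_sub_sq_real, real_inner_smul_right, norm_smul, mul_pow,
          Real.norm_eq_abs, sq_abs]
        ring
      have hzm : ‖z - m‖ ^ 2 = ‖z‖ ^ 2 - 2 * (s / (A * a)) * inner ℝ w z
          + (s / (A * a)) ^ 2 * ‖w‖ ^ 2 := by
        rw [norm_sub_sq_real, hm, real_inner_smul_right, norm_smul, mul_pow,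
          Real.norm_eq_abs, sq_abs, real_inner_comm]
        ring
      have hPw : ‖(P x : EuclideanSpace ℝ (Fin d))‖ = ‖w‖ := by rw [← hw, ι.norm_map]
      rw [horth, hwz, hzm, hPw]
      exact score_aux_scalar A σ a c s abar (‖x - P x‖ ^ 2) (‖w‖ ^ 2)
        (inner ℝ w z) (‖z‖ ^ 2) hA0.ne' hσ.ne' hs2 ha
        (by nlinarith) (by rw [hc])
    rw [hp x]
    have heq : (fun z : EuclideanSpace ℝ (Fin l) =>
          Real.exp (-(‖x - s • ι z‖ ^ 2 / (2 * A) + ‖z‖ ^ 2 / (2 * σ ^ 2))))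
        = fun z => Real.exp (-(‖x - P x‖ ^ 2 / (2 * A) + c * ‖P x‖ ^ 2 / (2 * A)))
            * Real.exp (-((a / 2) * ‖z - m‖ ^ 2)) := by
      funext z
      rw [hptwise z, neg_add, Real.exp_add]
    rw [heq, integral_const_mul]
    have htrans : (∫ z : EuclideanSpace ℝ (Fin l),
        Real.exp (-((a / 2) * ‖z - m‖ ^ 2))) = C := by
      rw [hC]
      have := integral_sub_right_eq_self (μ := (volume : Measure (EuclideanSpace ℝ (Fin l))))
        (fun u => Real.exp (-(a / 2) * ‖u‖ ^ 2)) m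
      simp only [neg_mul] at this ⊢
      exact this
    rw [htrans]; ring
  have hpos : ∀ x, 0 < p x := by
    intro x; rw [key x]; positivity
  -- derivative of the quadratic form
  set Pc : EuclideanSpace ℝ (Fin d) →L[ℝ] EuclideanSpace ℝ (Fin d) :=
    LinearMap.toContinuousLinearMap P with hPc
  have hlog : (fun y => Real.log (p y))
      = fun y => Real.log C + -(‖y - P y‖ ^ 2 / (2 * A) + c * ‖P y‖ ^ 2 / (2 * A)) := by
    funext y
    rw [key y, Real.log_mul hC0.ne' (Real.exp_pos _).ne', Real.log_exp]
  refine ⟨hpos, ?_, ?_⟩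
  · -- differentiability of p
    have hPdiff : Differentiable ℝ (fun y : EuclideanSpace ℝ (Fin d) => (P y : EuclideanSpace ℝ (Fin d))) :=
      Pc.differentiable
    have hq : Differentiable ℝ (fun y : EuclideanSpace ℝ (Fin d) =>
        (2 * A)⁻¹ * ‖y - P y‖ ^ 2 + (2 * A)⁻¹ * (c * ‖P y‖ ^ 2)) := by
      apply Differentiable.add
      · exact ((differentiable_id.sub hPdiff).norm_sq (𝕜 := ℝ)).const_mul _
      · exact (((hPdiff.norm_sq (𝕜 := ℝ)).const_mul c).const_mul _)
    have hthis : p = fun x => C * Real.exp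
        (-((2 * A)⁻¹ * ‖x - P x‖ ^ 2 + (2 * A)⁻¹ * (c * ‖P x‖ ^ 2))) := by
      funext x; rw [key x]; congr 1; ring
    rw [hthis]
    exact (hq.neg.exp).const_mul C
  · intro x
    rw [hlog]
    rw [hasGradientAt_iff_hasFDerivAt]
    have h1 : HasFDerivAt (fun y : EuclideanSpace ℝ (Fin d) => y - P y)
        (ContinuousLinearMap.id ℝ _ - Pc) x := (hasFDerivAt_id x).sub Pc.hasFDerivAt
    have h2 : HasFDerivAt (fun y : EuclideanSpace ℝ (Fin d) => ‖y - P y‖ ^ 2)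
        (2 • (innerSL ℝ (x - P x)).comp (ContinuousLinearMap.id ℝ _ - Pc)) x := h1.norm_sq
    have h3 : HasFDerivAt (fun y : EuclideanSpace ℝ (Fin d) => ‖(P y : EuclideanSpace ℝ (Fin d))‖ ^ 2)
        (2 • (innerSL ℝ (P x : EuclideanSpace ℝ (Fin d))).comp Pc) x := Pc.hasFDerivAt.norm_sq
    have h4 := (hasFDerivAt_const (Real.log C) x).add
      (((h2.const_mul ((2 * A)⁻¹)).add ((h3.const_mul c).const_mul ((2 * A)⁻¹))).neg)
    have h5 : HasFDerivAt (fun y : EuclideanSpace ℝ (Fin d) =>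
        Real.log C + -(‖y - P y‖ ^ 2 / (2 * A) + c * ‖P y‖ ^ 2 / (2 * A)))
        (0 + -((2 * A)⁻¹ • (2 • (innerSL ℝ (x - P x)).comp (ContinuousLinearMap.id ℝ _ - Pc))
          + (2 * A)⁻¹ • c • (2 • (innerSL ℝ (P x : EuclideanSpace ℝ (Fin d))).comp Pc))) x := by
      refine h4.congr_of_eventuallyEq (Filter.Eventually.of_forall fun y => ?_)
      simp only [Pi.add_apply, Pi.neg_apply]
      ring
    refine h5.congr_fderiv ?_
    ext v
    have o1 : inner ℝ (x - P x) (P v : EuclideanSpace ℝ (Fin d)) = (0:ℝ) := hPorth x _ (hPmem v)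
    have o2' : inner ℝ ((P x : EuclideanSpace ℝ (Fin d))) (v - P v) = (0:ℝ) := by
      rw [real_inner_comm]; exact hPorth v _ (hPmem x)
    simp only [ContinuousLinearMap.add_apply, ContinuousLinearMap.coe_smul',
      Pi.smul_apply, ContinuousLinearMap.zero_apply, ContinuousLinearMap.neg_apply,
      ContinuousLinearMap.comp_apply, ContinuousLinearMap.coe_sub',
      Pi.sub_apply, ContinuousLinearMap.id_apply, innerSL_apply_apply,
      InnerProductSpace.toDual_apply_apply, smul_eq_mul, nsmul_eq_mul]
    simp only [Pi.mul_apply, ContinuousLinearMap.comp_apply, ContinuousLinearMap.coe_sub',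
      Pi.sub_apply, ContinuousLinearMap.id_apply, innerSL_apply_apply, Nat.cast_ofNat]
    have hPcv : (Pc v : EuclideanSpace ℝ (Fin d)) = P v := rfl
    rw [hPcv]
    have e1 : inner ℝ (x - P x) (v - P v) = (inner ℝ (x - P x) v : ℝ) := by
      rw [inner_sub_right, o1, sub_zero]
    have e2 : inner ℝ ((P x : EuclideanSpace ℝ (Fin d))) (P v : EuclideanSpace ℝ (Fin d))
        = (inner ℝ (P x : EuclideanSpace ℝ (Fin d)) v : ℝ) := by
      rw [inner_sub_right] at o2'
      linarith
    have eR : inner ℝ (-(1 / A) • (x - P x) - (c / A) • P x) v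
        = -(1 / A) * inner ℝ (x - P x) v - c / A * (inner ℝ (P x : EuclideanSpace ℝ (Fin d)) v : ℝ) := by
      rw [inner_sub_left, real_inner_smul_left, real_inner_smul_left]
    rw [eR, e1, e2]
    push_cast
    exact score_aux_scalar2 A c _ _ hA0.ne'
end

section
/- Let ι : EuclideanSpace ℝ (Fin l) → EuclideanSpace ℝ (Fin d) be a linear isometry, let K be the range of ι, and let P be the orthogonal projection onto K. Let ᾱ ∈ (0,1), and for σ > 0 define p_σ(x) := ∫_{z ∈ ℝ^l} exp(−(‖x − √ᾱ • ι(z)‖²/(2(1−ᾱ)) + ‖z‖²/(2σ²))) dz. Then for every fixed x ∈ EuclideanSpace ℝ (Fin d), the score ∇ log p_σ(x) converges, as σ → ∞, to −(1/(1−ᾱ)) • (x − P x). -/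
open MeasureTheory Real Filter

open scoped RealInnerProductSpace

section aux

variable {V : Type*} [NormedAddCommGroup V] [InnerProductSpace ℝ V] [FiniteDimensional ℝ V]
  [MeasurableSpace V] [BorelSpace V]

/-- Real Gaussian integral with a linear term, on a finite-dimensional inner product space. -/
lemma aux_integral_rexp_neg_mul_sq_norm_add {b : ℝ} (hb : 0 < b) (c : ℝ) (w : V) :
    ∫ v : V, rexp (-b * ‖v‖ ^ 2 + c * ⟪w, v⟫) =
      (π / b) ^ ((Module.finrank ℝ V : ℝ) / 2) * rexp (c ^ 2 * ‖w‖ ^ 2 / (4 * b)) := by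
  have h := GaussianFourier.integral_cexp_neg_mul_sq_norm_add (V := V) (b := (b : ℂ))
      (by simpa using hb) (c : ℂ) w
  rw [← Complex.ofReal_inj]
  calc ((∫ v : V, rexp (-b * ‖v‖ ^ 2 + c * ⟪w, v⟫) : ℝ) : ℂ)
      = ∫ v : V, ((rexp (-b * ‖v‖ ^ 2 + c * ⟪w, v⟫) : ℝ) : ℂ) := integral_ofReal.symm
    _ = ∫ v : V, Complex.exp (-(b : ℂ) * ‖v‖ ^ 2 + (c : ℂ) * ⟪w, v⟫) := by
        congr 1; funext v
        rw [Complex.ofReal_exp]; push_cast; ring_nf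
    _ = ((π : ℂ) / b) ^ ((Module.finrank ℝ V : ℂ) / 2) *
          Complex.exp ((c : ℂ) ^ 2 * (‖w‖ : ℂ) ^ 2 / (4 * b)) := h
    _ = (((π / b) ^ ((Module.finrank ℝ V : ℝ) / 2) *
          rexp (c ^ 2 * ‖w‖ ^ 2 / (4 * b)) : ℝ) : ℂ) := by
        rw [Complex.ofReal_mul, Complex.ofReal_cpow (by positivity), Complex.ofReal_exp]
        push_cast
        ring_nf

end aux

section grad

variable {E F : Type*} [NormedAddCommGroup E] [InnerProductSpace ℝ E] [CompleteSpace E]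
  [NormedAddCommGroup F] [InnerProductSpace ℝ F] [CompleteSpace F]

/-- Gradient of the quadratic function `y ↦ L + (k‖By‖² − a‖y‖²)`. -/
lemma aux_hasGradientAt_quadratic (B : E →L[ℝ] F) (L k a : ℝ) (x : E) :
    HasGradientAt (fun y => L + (k * ‖B y‖ ^ 2 - a * ‖y‖ ^ 2))
      ((2 * k) • (ContinuousLinearMap.adjoint B (B x)) - (2 * a) • x) x := by
  have hB : HasFDerivAt (fun y : E => B y) B x := B.hasFDerivAt
  have h1 := hB.inner ℝ hB
  have h2 := (hasFDerivAt_id x).inner ℝ (hasFDerivAt_id x)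
  have hf := (((h1.const_mul k).sub (h2.const_mul a)).const_add L)
  have hfun : (fun y : E => L + (k * ‖B y‖ ^ 2 - a * ‖y‖ ^ 2))
      = (fun y : E => L + (k * ⟪B y, B y⟫ - a * ⟪y, y⟫)) := by
    funext y
    rw [real_inner_self_eq_norm_sq, real_inner_self_eq_norm_sq]
  rw [hfun, hasGradientAt_iff_hasFDerivAt]
  refine hf.congr_fderiv ?_
  apply ContinuousLinearMap.ext
  intro v
  simp only [InnerProductSpace.toDual_apply_apply, ContinuousLinearMap.coe_sub',
    Pi.sub_apply, ContinuousLinearMap.smul_apply, ContinuousLinearMap.coe_smul',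
    Pi.smul_apply, smul_eq_mul, ContinuousLinearMap.coe_comp', Function.comp_apply,
    ContinuousLinearMap.prod_apply, fderivInnerCLM_apply, ContinuousLinearMap.coe_id',
    id_eq, inner_sub_left, inner_smul_left, conj_trivial,
    ContinuousLinearMap.adjoint_inner_left]
  rw [real_inner_comm (B v) (B x), real_inner_comm v x]
  ring

end grad

/-- Uniform-on-subspace limit of the score (proof of Proposition 1).  With
`p_σ(x) = ∫ exp(−(‖x − √ᾱ•ι(z)‖²/(2(1−ᾱ)) + ‖z‖²/(2σ²))) dz`, for every fixed `x` the
score `∇ log p_σ(x)` converges, as `σ → ∞`, to `−(1/(1−ᾱ))•(x − Px)` where `P` is the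
orthogonal projection onto the subspace `K = range ι`. -/
theorem score_limit_uniform_on_subspace
    {l d : ℕ} (ι : EuclideanSpace ℝ (Fin l) →ₗᵢ[ℝ] EuclideanSpace ℝ (Fin d))
    (K : Submodule ℝ (EuclideanSpace ℝ (Fin d)))
    (hK : K = LinearMap.range ι.toLinearMap)
    (P : EuclideanSpace ℝ (Fin d) →ₗ[ℝ] EuclideanSpace ℝ (Fin d))
    (hPmem : ∀ x, P x ∈ K)
    (hPorth : ∀ x, ∀ v ∈ K, inner ℝ (x - P x) v = (0 : ℝ))
    (abar : ℝ) (habar : abar ∈ Set.Ioo (0:ℝ) 1)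
    (p : ℝ → EuclideanSpace ℝ (Fin d) → ℝ)
    (hp : ∀ σ, ∀ x, p σ x = ∫ z : EuclideanSpace ℝ (Fin l),
      Real.exp (-(‖x - Real.sqrt abar • ι z‖ ^ 2 / (2 * (1 - abar))
        + ‖z‖ ^ 2 / (2 * σ ^ 2)))) :
    ∀ x : EuclideanSpace ℝ (Fin d),
      ∀ g : ℝ → EuclideanSpace ℝ (Fin d),
        (∀ σ, 0 < σ → HasGradientAt (fun y => Real.log (p σ y)) (g σ) x) →
        Tendsto g atTop (nhds (-(1 / (1 - abar)) • (x - P x))) := by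
  obtain ⟨hab0, hab1⟩ := habar
  have h1a : (0:ℝ) < 1 - abar := by linarith
  intro x g hg
  set A : EuclideanSpace ℝ (Fin l) →L[ℝ] EuclideanSpace ℝ (Fin d) :=
    ι.toContinuousLinearMap with hA
  set B : EuclideanSpace ℝ (Fin d) →L[ℝ] EuclideanSpace ℝ (Fin l) :=
    ContinuousLinearMap.adjoint A with hB
  have hAeq : ∀ z, A z = ι z := fun z => rfl
  set a : ℝ := 1 / (2 * (1 - abar)) with ha
  have hapos : 0 < a := by positivity
  set m : ℝ := 2 * a * Real.sqrt abar with hm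
  set Q : EuclideanSpace ℝ (Fin d) := A (B x) with hQ
  -- Q is the orthogonal projection of x
  have hQK : Q ∈ K := by
    rw [hK]
    exact ⟨B x, rfl⟩
  have hinner_adj : ∀ y : EuclideanSpace ℝ (Fin d), ∀ u, ⟪B y, u⟫ = ⟪y, ι u⟫ := by
    intro y u
    rw [← hAeq u]
    exact ContinuousLinearMap.adjoint_inner_left A u y
  have horthQ : ∀ v ∈ K, ⟪x - Q, v⟫ = 0 := by
    rw [hK]
    rintro v ⟨u, rfl⟩
    have h1 : ⟪x, ι u⟫ = ⟪B x, u⟫ := (hinner_adj x u).symm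
    have h2 : ⟪Q, ι.toLinearMap u⟫ = ⟪B x, u⟫ := by
      show ⟪ι (B x), ι u⟫ = ⟪B x, u⟫
      exact ι.inner_map_map (B x) u
    rw [inner_sub_left, h2]
    show ⟪x, ι u⟫ - ⟪B x, u⟫ = 0
    rw [h1, sub_self]
  have hPxQ : P x = Q := by
    have hd : P x - Q ∈ K := K.sub_mem (hPmem x) hQK
    have h1' : ⟪x - P x, P x - Q⟫ = 0 := hPorth x _ hd
    have h2' : ⟪x - Q, P x - Q⟫ = 0 := horthQ _ hd
    have hz : ⟪P x - Q, P x - Q⟫ = 0 := by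
      have heq : (x - Q) - (x - P x) = P x - Q := by abel
      calc ⟪P x - Q, P x - Q⟫ = ⟪(x - Q) - (x - P x), P x - Q⟫ := by rw [heq]
        _ = ⟪x - Q, P x - Q⟫ - ⟪x - P x, P x - Q⟫ := inner_sub_left _ _ _
        _ = 0 := by rw [h1', h2', sub_zero]
    have := inner_self_eq_zero.mp hz
    exact sub_eq_zero.mp this
  -- closed form of log p σ
  have key : ∀ σ : ℝ, 0 < σ → ∀ y, Real.log (p σ y) =
      Real.log ((π / (a * abar + 1 / (2 * σ ^ 2))) ^ ((l : ℝ) / 2)) +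
        ((m ^ 2 / (4 * (a * abar + 1 / (2 * σ ^ 2)))) * ‖B y‖ ^ 2 - a * ‖y‖ ^ 2) := by
    intro σ hσ y
    set c : ℝ := a * abar + 1 / (2 * σ ^ 2) with hc
    have hcpos : 0 < c := by positivity
    have hexp : ∀ z : EuclideanSpace ℝ (Fin l),
        (-(‖y - Real.sqrt abar • ι z‖ ^ 2 / (2 * (1 - abar)) + ‖z‖ ^ 2 / (2 * σ ^ 2)))
          = (-c * ‖z‖ ^ 2 + m * ⟪B y, z⟫) + (-(a * ‖y‖ ^ 2)) := by
      intro z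
      have hns : ‖y - Real.sqrt abar • (ι z)‖ ^ 2
          = ‖y‖ ^ 2 - 2 * (Real.sqrt abar * ⟪B y, z⟫) + abar * ‖z‖ ^ 2 := by
        rw [norm_sub_sq_real, real_inner_smul_right, norm_smul, ι.norm_map,
          mul_pow, Real.norm_eq_abs, sq_abs, Real.sq_sqrt hab0.le, hinner_adj]
      rw [hns, hc, hm, ha]
      have hσ2 : σ ^ 2 ≠ 0 := by positivity
      field_simp
      ring
    rw [hp σ y]
    have : (∫ z : EuclideanSpace ℝ (Fin l),
        Real.exp (-(‖y - Real.sqrt abar • ι z‖ ^ 2 / (2 * (1 - abar))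
          + ‖z‖ ^ 2 / (2 * σ ^ 2))))
        = (∫ z : EuclideanSpace ℝ (Fin l),
            Real.exp (-c * ‖z‖ ^ 2 + m * ⟪B y, z⟫)) * Real.exp (-(a * ‖y‖ ^ 2)) := by
      rw [← integral_mul_const]
      congr 1; funext z
      rw [hexp z, Real.exp_add]
    rw [this, aux_integral_rexp_neg_mul_sq_norm_add hcpos m (B y),
      finrank_euclideanSpace_fin, mul_assoc, ← Real.exp_add,
      Real.log_mul (by positivity) (Real.exp_ne_zero _), Real.log_exp]
    ring
  -- gradient formula for σ > 0
  have hBadj : ContinuousLinearMap.adjoint B (B x) = Q := by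
    rw [hB, ContinuousLinearMap.adjoint_adjoint]
  have hgrad : ∀ σ : ℝ, 0 < σ →
      g σ = (2 * (m ^ 2 / (4 * (a * abar + 1 / (2 * σ ^ 2))))) • Q - (2 * a) • x := by
    intro σ hσ
    have hG := aux_hasGradientAt_quadratic B
      (Real.log ((π / (a * abar + 1 / (2 * σ ^ 2))) ^ ((l : ℝ) / 2)))
      (m ^ 2 / (4 * (a * abar + 1 / (2 * σ ^ 2)))) a x
    rw [hBadj] at hG
    have hfeq : (fun y => Real.log (p σ y))
        = (fun y => Real.log ((π / (a * abar + 1 / (2 * σ ^ 2))) ^ ((l : ℝ) / 2)) +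
            ((m ^ 2 / (4 * (a * abar + 1 / (2 * σ ^ 2)))) * ‖B y‖ ^ 2 - a * ‖y‖ ^ 2)) :=
      funext (key σ hσ)
    have hg' := hg σ hσ
    rw [hfeq] at hg'
    exact hg'.unique hG
  -- pass to the limit
  have hctend : Tendsto (fun σ : ℝ => a * abar + 1 / (2 * σ ^ 2)) atTop (nhds (a * abar)) := by
    have h2 : Tendsto (fun σ : ℝ => 1 / (2 * σ ^ 2)) atTop (nhds 0) := by
      simp only [one_div]
      apply Tendsto.comp tendsto_inv_atTop_zero
      apply Tendsto.const_mul_atTop (by norm_num : (0:ℝ) < 2)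
      exact tendsto_pow_atTop (by norm_num)
    simpa using tendsto_const_nhds.add h2
  have habne : a * abar ≠ 0 := by positivity
  have hktend : Tendsto (fun σ : ℝ => 2 * (m ^ 2 / (4 * (a * abar + 1 / (2 * σ ^ 2)))))
      atTop (nhds (2 * a)) := by
    have h4 : Tendsto (fun σ : ℝ => 4 * (a * abar + 1 / (2 * σ ^ 2))) atTop
        (nhds (4 * (a * abar))) := hctend.const_mul 4
    have hdiv : Tendsto (fun σ : ℝ => m ^ 2 / (4 * (a * abar + 1 / (2 * σ ^ 2)))) atTop
        (nhds (m ^ 2 / (4 * (a * abar)))) :=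
      tendsto_const_nhds.div h4 (by positivity)
    have := hdiv.const_mul 2
    convert this using 2
    rw [hm, mul_pow, mul_pow, Real.sq_sqrt hab0.le]
    field_simp
    ring
  have hmain : Tendsto (fun σ : ℝ =>
      (2 * (m ^ 2 / (4 * (a * abar + 1 / (2 * σ ^ 2))))) • Q - (2 * a) • x) atTop
      (nhds ((2 * a) • Q - (2 * a) • x)) :=
    (hktend.smul_const Q).sub tendsto_const_nhds
  have hfinal : (2 * a) • Q - (2 * a) • x = -(1 / (1 - abar)) • (x - P x) := by
    rw [hPxQ]
    have h2a : 2 * a = 1 / (1 - abar) := by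
      rw [ha]; field_simp
    rw [← h2a, neg_smul, smul_sub]
    abel
  rw [← hfinal]
  apply hmain.congr'
  filter_upwards [eventually_gt_atTop 0] with σ hσ
  exact (hgrad σ hσ).symm
end

section
/- Let E be a finite-dimensional real inner product space, K a subspace of E, and P the orthogonal projection onto K. Let ᾱ ∈ (0,1) and define D(x) := (1/√ᾱ) • P x. Let ℓ : E → ℝ be a function, let x ∈ E, and suppose ℓ is differentiable at D(x). Then for every γ > 0, the composition ℓ ∘ D is differentiable at x, its gradient satisfies ∇(ℓ ∘ D)(x) = (1/√ᾱ) • P(∇ℓ(D x)), and the DPS update with manifold-constrained gradient equals a projected gradient step on the clean manifold: D(x) − γ • ∇(ℓ ∘ D)(x) = P( D(x) − ζ • ∇ℓ(D x) ) with ζ := γ/√ᾱ. -/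
open Real

/-- Equation (18) of Proposition 1 (Manifold Constrained Gradient).  With `P` the
orthogonal projection onto the subspace `K` and `D(x) = (1/√ᾱ)•Px` the Tweedie denoiser,
if `ℓ` is differentiable at `D(x)` with gradient `g = ∇ℓ(D x)`, then `ℓ ∘ D` is
differentiable at `x` with gradient `∇(ℓ∘D)(x) = (1/√ᾱ)•P(∇ℓ(D x))`, and the DPS update
equals a projected gradient step:
`D(x) − γ•∇(ℓ∘D)(x) = P(D(x) − ζ•∇ℓ(D x))` with `ζ = γ/√ᾱ`. -/
theorem mcg_is_projected_gradient
    {E : Type*} [NormedAddCommGroup E] [InnerProductSpace ℝ E] [FiniteDimensional ℝ E]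
    (K : Submodule ℝ E) (P : E →L[ℝ] E)
    (hPmem : ∀ x, P x ∈ K)
    (hPorth : ∀ x, ∀ v ∈ K, inner ℝ (x - P x) v = (0 : ℝ))
    (abar : ℝ) (habar : abar ∈ Set.Ioo (0:ℝ) 1)
    (D : E → E) (hD : ∀ x, D x = (1 / Real.sqrt abar) • P x)
    (ℓ : E → ℝ) (x : E) (g : E) (hℓ : HasGradientAt ℓ g (D x))
    (γ : ℝ) (hγ : 0 < γ) :
    HasGradientAt (ℓ ∘ D) ((1 / Real.sqrt abar) • P g) x ∧
      D x - γ • ((1 / Real.sqrt abar) • P g)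
        = P (D x - (γ / Real.sqrt abar) • g) := by
  set c : ℝ := 1 / Real.sqrt abar with hc
  -- self-adjointness of P
  have hsa : ∀ u v : E, (inner ℝ (P u) v : ℝ) = inner ℝ u (P v) := by
    intro u v
    have h1 : (inner ℝ (P u) (v - P v) : ℝ) = 0 := by
      rw [real_inner_comm]; exact hPorth v _ (hPmem u)
    have h2 : (inner ℝ (u - P u) (P v) : ℝ) = 0 := hPorth u _ (hPmem v)
    have e1 : (inner ℝ (P u) v : ℝ) = inner ℝ (P u) (P v) := by
      have := inner_sub_right (𝕜 := ℝ) (P u) v (P v)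
      rw [h1] at this; linarith
    have e2 : (inner ℝ u (P v) : ℝ) = inner ℝ (P u) (P v) := by
      have := inner_sub_left (𝕜 := ℝ) u (P u) (P v)
      rw [h2] at this; linarith
    rw [e1, e2]
  -- idempotence
  have hidem : ∀ u : E, P (P u) = P u := by
    intro u
    have hmem : P u - P (P u) ∈ K := K.sub_mem (hPmem u) (hPmem (P u))
    have : (inner ℝ (P u - P (P u)) (P u - P (P u)) : ℝ) = 0 :=
      hPorth (P u) _ hmem
    have := inner_self_eq_zero (𝕜 := ℝ).mp this
    rw [sub_eq_zero] at this
    exact this.symm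
  -- D as a continuous linear map
  set L : E →L[ℝ] E := c • P with hL
  have hDL : D = fun y => L y := by
    funext y; rw [hD y]; rfl
  constructor
  · rw [hasGradientAt_iff_hasFDerivAt]
    have hcomp : HasFDerivAt (ℓ ∘ D) (((InnerProductSpace.toDual ℝ E) g).comp L) x := by
      have hℓ' := hasGradientAt_iff_hasFDerivAt.mp hℓ
      rw [hD x] at hℓ'
      rw [hDL]
      exact hℓ'.comp x L.hasFDerivAt
    refine hcomp.congr_fderiv ?_
    ext v
    simp only [ContinuousLinearMap.comp_apply, InnerProductSpace.toDual_apply_apply,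
      ContinuousLinearMap.smul_apply, hL]
    rw [real_inner_smul_left, real_inner_smul_right, hsa]
  · rw [hD x, map_sub, map_smul, map_smul, hidem, smul_smul]
    have : γ * c = γ / Real.sqrt abar := by rw [hc]; ring
    rw [this]
end

section
/- Let E be a vector space over ℝ. Let α, ᾱ' be real numbers with 0 < α < 1 and 0 < ᾱ' ≤ 1, set ᾱ := α·ᾱ' and β̃ := √((1−ᾱ')/(1−ᾱ)) · √(1−α). Then 1 − ᾱ' − β̃² ≥ 0, and for all vectors x, ε ∈ E the DDIM update with η = 1 coincides with the DDPM ancestral-sampling mean: √ᾱ' • ( (1/√ᾱ) • (x − √(1−ᾱ) • ε) ) + √(1 − ᾱ' − β̃²) • ε = (1/√α) • ( x − ((1−α)/√(1−ᾱ)) • ε ). -/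
/-- With `0 < α < 1`, `0 < ᾱ' ≤ 1`, `ᾱ = α·ᾱ'` and
`β̃ = √((1−ᾱ')/(1−ᾱ))·√(1−α)`, we have `1 − ᾱ' − β̃² ≥ 0`, and the DDIM update with
`η = 1` coincides with the DDPM ancestral-sampling mean:
`√ᾱ' • ((1/√ᾱ) • (x − √(1−ᾱ) • ε)) + √(1 − ᾱ' − β̃²) • ε
  = (1/√α) • (x − ((1−α)/√(1−ᾱ)) • ε)`. -/
theorem ddim_eta_one_is_ddpm_mean
    {E : Type*} [AddCommGroup E] [Module ℝ E]
    (α abar' : ℝ) (hα : 0 < α) (hα1 : α < 1) (habar'0 : 0 < abar') (habar'1 : abar' ≤ 1)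
    (abar btil : ℝ)
    (habar : abar = α * abar')
    (hbtil : btil = Real.sqrt ((1 - abar') / (1 - abar)) * Real.sqrt (1 - α)) :
    0 ≤ 1 - abar' - btil ^ 2 ∧
      ∀ x ε : E,
        Real.sqrt abar' • ((1 / Real.sqrt abar) • (x - Real.sqrt (1 - abar) • ε))
            + Real.sqrt (1 - abar' - btil ^ 2) • ε
          = (1 / Real.sqrt α) • (x - ((1 - α) / Real.sqrt (1 - abar)) • ε) := by
  have habar1 : abar < 1 := by nlinarith
  have habar0 : 0 < abar := by rw [habar]; positivity
  have h1abar : (0:ℝ) < 1 - abar := by linarith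
  have hb2 : btil ^ 2 = (1 - abar') / (1 - abar) * (1 - α) := by
    rw [hbtil, mul_pow, Real.sq_sqrt (div_nonneg (by linarith) h1abar.le),
      Real.sq_sqrt (by linarith)]
  have key : 1 - abar' - btil ^ 2 = α * (1 - abar') ^ 2 / (1 - abar) := by
    have hne : (1:ℝ) - abar ≠ 0 := h1abar.ne'
    rw [hb2]; field_simp; linear_combination (abar' - 1) * habar
  have hk0 : 0 ≤ 1 - abar' - btil ^ 2 := by
    rw [key]; positivity
  refine ⟨hk0, fun x ε => ?_⟩
  have hsq : Real.sqrt α ^ 2 = α := Real.sq_sqrt hα.le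
  have hsq2 : Real.sqrt abar' ^ 2 = abar' := Real.sq_sqrt habar'0.le
  have hsq3 : Real.sqrt (1 - abar) ^ 2 = 1 - abar := Real.sq_sqrt h1abar.le
  have hne1 : Real.sqrt α ≠ 0 := (Real.sqrt_pos.mpr hα).ne'
  have hne2 : Real.sqrt abar' ≠ 0 := (Real.sqrt_pos.mpr habar'0).ne'
  have hne3 : Real.sqrt (1 - abar) ≠ 0 := (Real.sqrt_pos.mpr h1abar).ne'
  have hsm : Real.sqrt abar = Real.sqrt α * Real.sqrt abar' := by
    rw [habar, Real.sqrt_mul hα.le]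
  have hsk : Real.sqrt (1 - abar' - btil ^ 2)
      = Real.sqrt α * (1 - abar') / Real.sqrt (1 - abar) := by
    have hh : (Real.sqrt α * (1 - abar') / Real.sqrt (1 - abar)) ^ 2
        = α * (1 - abar') ^ 2 / (1 - abar) := by
      rw [div_pow, mul_pow, hsq, hsq3]
    rw [key, ← hh, Real.sqrt_sq]
    apply div_nonneg _ (Real.sqrt_nonneg _)
    exact mul_nonneg (Real.sqrt_nonneg _) (by linarith)
  rw [hsm, hsk]
  match_scalars
  · field_simp
  · field_simp
    linear_combination (-1 : ℝ) * hsq3 + (1 - abar') * hsq + habar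
end

section
/- Let ε₁, ε₂ : Ω → EuclideanSpace ℝ (Fin d) be independent random vectors on a probability space (Ω, ℙ), each with law the standard Gaussian measure on EuclideanSpace ℝ (Fin d). Let α, ᾱ' ∈ [0,1] and x₀ ∈ EuclideanSpace ℝ (Fin d). Then the law of ω ↦ √α • ( √ᾱ' • x₀ + √(1−ᾱ') • ε₁(ω) ) + √(1−α) • ε₂(ω) equals the law of ω ↦ √(α·ᾱ') • x₀ + √(1 − α·ᾱ') • ε₁(ω). That is, composing one Gaussian forward diffusion step q(x_t|x_{t−1}) = N(√α_t x_{t−1}, (1−α_t)I) with the marginal q(x_{t−1}|x₀) = N(√ᾱ_{t−1} x₀, (1−ᾱ_{t−1})I) yields the marginal q(x_t|x₀) = N(√ᾱ_t x₀, (1−ᾱ_t)I) with ᾱ_t = α_t·ᾱ_{t−1}. -/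
open MeasureTheory ProbabilityTheory

open Real
open scoped NNReal ENNReal

lemma gaussianPDFReal_conv (v₁ v₂ : ℝ≥0) (h₁ : v₁ ≠ 0) (h₂ : v₂ ≠ 0) (y : ℝ) :
    ∫ x, gaussianPDFReal 0 v₁ x * gaussianPDFReal 0 v₂ (y - x)
      = gaussianPDFReal 0 (v₁ + v₂) y := by
  set a := (v₁ : ℝ) with hadef
  set b := (v₂ : ℝ) with hbdef
  have ha : (0:ℝ) < a := NNReal.coe_pos.2 h₁.bot_lt
  have hb : (0:ℝ) < b := NNReal.coe_pos.2 h₂.bot_lt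
  have hab : (0:ℝ) < a + b := by linarith
  set B := (a + b) / (2 * a * b) with hBdef
  have hB : (0:ℝ) < B := by positivity
  set m := a * y / (a + b) with hmdef
  have key : ∀ x, gaussianPDFReal 0 v₁ x * gaussianPDFReal 0 v₂ (y - x)
      = ((√(2*π*a))⁻¹ * (√(2*π*b))⁻¹ * rexp (-y^2/(2*(a+b)))) * rexp (-B * (x - m)^2) := by
    intro x
    simp only [gaussianPDFReal, sub_zero, ← hadef, ← hbdef]
    have hexp : -x^2/(2*a) + -(y-x)^2/(2*b) = -y^2/(2*(a+b)) + (-B*(x-m)^2) := by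
      rw [hBdef, hmdef]; field_simp; ring
    rw [mul_mul_mul_comm, ← Real.exp_add, hexp, Real.exp_add]; ring
  rw [integral_congr_ae (Filter.Eventually.of_forall key)] -- maybe simp_rw
  rw [MeasureTheory.integral_const_mul]
  have : ∫ (x:ℝ), rexp (-B * (x - m)^2) = √(π / B) := by
    rw [integral_sub_right_eq_self (fun x => rexp (-B * x^2)) m]
    exact integral_gaussian B
  rw [this]
  simp only [gaussianPDFReal, sub_zero]
  rw [NNReal.coe_add, ← hadef, ← hbdef]
  rw [mul_comm ((√(2*π*a))⁻¹ * (√(2*π*b))⁻¹ * rexp (-y^2/(2*(a+b)))) _]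
  rw [← mul_assoc, ← mul_assoc]
  congr 1
  rw [← Real.sqrt_inv (2*π*a), ← Real.sqrt_inv (2*π*b), ← Real.sqrt_mul (by positivity),
    ← Real.sqrt_mul (by positivity), ← Real.sqrt_inv (2*π*(a+b))]
  congr 1
  rw [hBdef]
  field_simp

lemma gaussianReal_conv (v₁ v₂ : ℝ≥0) (h₁ : v₁ ≠ 0) (h₂ : v₂ ≠ 0) :
    ((gaussianReal 0 v₁).prod (gaussianReal 0 v₂)).map (fun p : ℝ × ℝ => p.1 + p.2)
      = gaussianReal 0 (v₁ + v₂) := by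
  have h12 : v₁ + v₂ ≠ 0 := by positivity
  have hmadd : Measurable (fun p : ℝ × ℝ => p.1 + p.2) := measurable_fst.add measurable_snd
  set f₁ := gaussianPDF 0 v₁ with hf₁
  set f₂ := gaussianPDF 0 v₂ with hf₂
  have hm₁ : Measurable f₁ := measurable_gaussianPDF 0 v₁
  have hm₂ : Measurable f₂ := measurable_gaussianPDF 0 v₂
  ext s hs
  rw [Measure.map_apply hmadd hs, gaussianReal_of_var_ne_zero 0 h₁,
    gaussianReal_of_var_ne_zero 0 h₂, gaussianReal_of_var_ne_zero 0 h12,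
    Measure.prod_apply (hs.preimage hmadd)]
  set F : ℝ → ℝ≥0∞ := s.indicator 1 with hF
  have hmF : Measurable F := (measurable_one.indicator hs)
  have inner : ∀ x : ℝ, (volume.withDensity f₂) (Prod.mk x ⁻¹' ((fun p : ℝ × ℝ => p.1 + p.2) ⁻¹' s))
      = ∫⁻ z, F z * f₂ (z - x) := by
    intro x
    have hpre : (Prod.mk x ⁻¹' ((fun p : ℝ × ℝ => p.1 + p.2) ⁻¹' s)) = (fun y => x + y) ⁻¹' s := rfl
    rw [hpre, withDensity_apply _ (hs.preimage (measurable_const_add x)),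
      ← lintegral_indicator (hs.preimage (measurable_const_add x)) _]
    have : ∀ y : ℝ, ((fun y => x + y) ⁻¹' s).indicator f₂ y = F (x + y) * f₂ ((x + y) - x) := by
      intro y
      by_cases h : x + y ∈ s
      · simp [Set.indicator_of_mem, h, Set.mem_preimage, hF, add_sub_cancel_left]
      · simp [Set.indicator_of_notMem, h, Set.mem_preimage, hF, add_sub_cancel_left]
    simp_rw [this]
    exact lintegral_add_left_eq_self (fun z => F z * f₂ (z - x)) x
  simp_rw [← hf₁, ← hf₂, inner]
  have hmjoint : Measurable (fun p : ℝ × ℝ => F p.2 * f₂ (p.2 - p.1)) :=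
    (hmF.comp measurable_snd).mul (hm₂.comp (measurable_snd.sub measurable_fst))
  have hmint : Measurable fun x => ∫⁻ z, F z * f₂ (z - x) :=
    Measurable.lintegral_prod_right' (f := fun p : ℝ × ℝ => F p.2 * f₂ (p.2 - p.1)) hmjoint
  rw [lintegral_withDensity_eq_lintegral_mul _ hm₁ hmint]
  simp only [Pi.mul_apply]
  have swap : ∫⁻ x, f₁ x * ∫⁻ z, F z * f₂ (z - x) = ∫⁻ z, F z * ∫⁻ x, f₁ x * f₂ (z - x) := by
    have : ∀ x : ℝ, f₁ x * ∫⁻ z, F z * f₂ (z - x) = ∫⁻ z, F z * (f₁ x * f₂ (z - x)) := by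
      intro x
      rw [← lintegral_const_mul (f := fun z => F z * f₂ (z - x)) _
        (hmF.mul (hm₂.comp (measurable_sub_const x)))]
      congr 1; ext z; ring
    simp_rw [this]
    rw [lintegral_lintegral_swap]
    · congr 1; ext z
      exact lintegral_const_mul (f := fun x => f₁ x * f₂ (z - x)) _
        (hm₁.mul (hm₂.comp (measurable_const_sub z)))
    · exact ((hmF.comp measurable_snd).mul ((hm₁.comp measurable_fst).mul
        (hm₂.comp (measurable_snd.sub measurable_fst)))).aemeasurable
  rw [swap]
  have hptwise : ∀ z : ℝ, ∫⁻ x, f₁ x * f₂ (z - x) = gaussianPDF 0 (v₁ + v₂) z := by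
    intro z
    have heq : ∀ x : ℝ, f₁ x * f₂ (z - x)
        = ENNReal.ofReal (gaussianPDFReal 0 v₁ x * gaussianPDFReal 0 v₂ (z - x)) := by
      intro x
      rw [hf₁, hf₂, gaussianPDF, gaussianPDF,
        ← ENNReal.ofReal_mul (gaussianPDFReal_nonneg 0 v₁ x)]
    simp_rw [heq]
    have hint : Integrable (fun x => gaussianPDFReal 0 v₁ x * gaussianPDFReal 0 v₂ (z - x)) := by
      refine Integrable.mono ((integrable_gaussianPDFReal 0 v₁).mul_const
        ((Real.sqrt (2 * π * v₂))⁻¹)) ?_ ?_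
      · exact ((measurable_gaussianPDFReal 0 v₁).mul
          ((measurable_gaussianPDFReal 0 v₂).comp (measurable_const_sub z))).aestronglyMeasurable
      · refine Filter.Eventually.of_forall fun x => ?_
        rw [Real.norm_eq_abs, Real.norm_eq_abs,
          abs_of_nonneg (mul_nonneg (gaussianPDFReal_nonneg _ _ _) (gaussianPDFReal_nonneg _ _ _)),
          abs_of_nonneg (mul_nonneg (gaussianPDFReal_nonneg _ _ _) (by positivity))]
        refine mul_le_mul_of_nonneg_left ?_ (gaussianPDFReal_nonneg _ _ _)
        rw [gaussianPDFReal]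
        calc (Real.sqrt (2 * π * v₂))⁻¹ * rexp (-(z - x - 0) ^ 2 / (2 * v₂))
            ≤ (Real.sqrt (2 * π * v₂))⁻¹ * 1 := by
              refine mul_le_mul_of_nonneg_left ?_ (by positivity)
              rw [Real.exp_le_one_iff]
              exact div_nonpos_of_nonpos_of_nonneg (neg_nonpos.2 (sq_nonneg _)) (by positivity)
          _ = (Real.sqrt (2 * π * v₂))⁻¹ := mul_one _
    rw [← ofReal_integral_eq_lintegral_ofReal hint (Filter.Eventually.of_forall fun x =>
      mul_nonneg (gaussianPDFReal_nonneg _ _ _) (gaussianPDFReal_nonneg _ _ _))]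
    rw [gaussianPDFReal_conv v₁ v₂ h₁ h₂ z]
    rfl
  simp_rw [hptwise]
  rw [withDensity_apply _ hs, ← lintegral_indicator hs _]
  congr 1
  ext z
  by_cases h : z ∈ s
  · simp [Set.indicator_of_mem, h, hF]
  · simp [Set.indicator_of_notMem, h, hF]

lemma gaussian_linComb (a b : ℝ) :
    ((gaussianReal 0 1).prod (gaussianReal 0 1)).map (fun p : ℝ × ℝ => a * p.1 + b * p.2)
      = gaussianReal 0 (⟨a^2 + b^2, by positivity⟩ : ℝ≥0) := by
  by_cases ha : a = 0
  · subst ha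
    have hfun : (fun p : ℝ × ℝ => 0 * p.1 + b * p.2) = (fun x => b * x) ∘ Prod.snd := by
      funext p; simp
    rw [hfun, ← Measure.map_map (measurable_const_mul b) measurable_snd,
      Measure.map_snd_prod, measure_univ, one_smul, gaussianReal_map_const_mul]
    congr 1
    · ring
    · ext; simp; rfl
  by_cases hb : b = 0
  · subst hb
    have hfun : (fun p : ℝ × ℝ => a * p.1 + 0 * p.2) = (fun x => a * x) ∘ Prod.fst := by
      funext p; simp
    rw [hfun, ← Measure.map_map (measurable_const_mul a) measurable_fst,
      Measure.map_fst_prod, measure_univ, one_smul, gaussianReal_map_const_mul]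
    congr 1
    · ring
    · ext; simp; rfl
  · have h1 : (gaussianReal 0 1).map (fun x => a * x) = gaussianReal 0 ⟨a^2, sq_nonneg a⟩ := by
      rw [gaussianReal_map_const_mul]; congr 1; · ring
      · ext; simp; rfl
    have h2 : (gaussianReal 0 1).map (fun x => b * x) = gaussianReal 0 ⟨b^2, sq_nonneg b⟩ := by
      rw [gaussianReal_map_const_mul]; congr 1; · ring
      · ext; simp; rfl
    have hprod := Measure.map_prod_map (f := fun x => a * x) (g := fun x => b * x)
      (gaussianReal 0 1) (gaussianReal 0 1) (measurable_const_mul a) (measurable_const_mul b)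
    rw [h1, h2] at hprod
    have hcomp : (fun p : ℝ × ℝ => a * p.1 + b * p.2)
        = (fun p : ℝ × ℝ => p.1 + p.2) ∘ Prod.map (fun x => a * x) (fun x => b * x) := by
      funext p; simp [Prod.map]
    rw [hcomp, ← Measure.map_map (g := fun p : ℝ × ℝ => p.1 + p.2) (measurable_fst.add measurable_snd)
      ((measurable_const_mul a).prodMap (measurable_const_mul b)), ← hprod]
    refine (gaussianReal_conv _ _ (by intro h0; exact ha ((pow_eq_zero_iff (n := 2) two_ne_zero).mp (congrArg NNReal.toReal h0)))
      (by intro h0; exact hb ((pow_eq_zero_iff (n := 2) two_ne_zero).mp (congrArg NNReal.toReal h0)))).trans ?_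
    congr 1

lemma pi_linComb {d : ℕ} (a b c : ℝ) (h : a^2 + b^2 = c^2) :
    ((Measure.pi fun _ : Fin d => gaussianReal 0 1).prod
        (Measure.pi fun _ : Fin d => gaussianReal 0 1)).map
      (fun p : (Fin d → ℝ) × (Fin d → ℝ) => a • p.1 + b • p.2)
      = (Measure.pi fun _ : Fin d => gaussianReal 0 1).map (fun x => c • x) := by
  set g := gaussianReal 0 1 with hg
  set ν : Measure ℝ := gaussianReal 0 (⟨c^2, sq_nonneg c⟩) with hν
  have hmapc : MeasurePreserving (fun x : ℝ => c * x) g ν := by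
    refine ⟨measurable_const_mul c, ?_⟩
    rw [hg, hν]
    rw [show (fun x : ℝ => c * x) = (c * ·) from rfl, gaussianReal_map_const_mul]
    congr 1
    · ring
    · ext; simp; rfl
  have hmaph : MeasurePreserving (fun p : ℝ × ℝ => a * p.1 + b * p.2) (g.prod g) ν := by
    refine ⟨(measurable_fst.const_mul a).add (measurable_snd.const_mul b), ?_⟩
    rw [hg, hν, gaussian_linComb]
    congr 1
    ext
    exact h
  haveI : IsProbabilityMeasure ν := by
    rw [← hmapc.map_eq]
    haveI : IsProbabilityMeasure g := by rw [hg]; infer_instance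
    exact Measure.isProbabilityMeasure_map hmapc.measurable.aemeasurable
  have hR := measurePreserving_pi (fun _ : Fin d => g) (fun _ => ν) (fun _ => hmapc)
  have hL := measurePreserving_pi (fun _ : Fin d => g.prod g) (fun _ => ν)
    (fun _ => hmaph)
  have hprod := (measurePreserving_arrowProdEquivProdArrow ℝ ℝ (Fin d)
    (fun _ => g) (fun _ => g)).map_eq
  have hmf : Measurable (fun p : (Fin d → ℝ) × (Fin d → ℝ) => a • p.1 + b • p.2) :=
    (measurable_fst.const_smul a).add (measurable_snd.const_smul b)
  calc ((Measure.pi fun _ : Fin d => g).prod (Measure.pi fun _ : Fin d => g)).map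
        (fun p : (Fin d → ℝ) × (Fin d → ℝ) => a • p.1 + b • p.2)
      = ((Measure.pi fun _ : Fin d => g.prod g).map
          (MeasurableEquiv.arrowProdEquivProdArrow ℝ ℝ (Fin d))).map
        (fun p : (Fin d → ℝ) × (Fin d → ℝ) => a • p.1 + b • p.2) := by rw [hprod]
    _ = (Measure.pi fun _ : Fin d => g.prod g).map
          ((fun p : (Fin d → ℝ) × (Fin d → ℝ) => a • p.1 + b • p.2)
            ∘ (MeasurableEquiv.arrowProdEquivProdArrow ℝ ℝ (Fin d))) :=
        Measure.map_map hmf (MeasurableEquiv.arrowProdEquivProdArrow ℝ ℝ (Fin d)).measurable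
    _ = (Measure.pi fun _ : Fin d => g.prod g).map
          (fun (q : Fin d → ℝ × ℝ) (i : Fin d) => a * (q i).1 + b * (q i).2) := by
        congr 1
    _ = Measure.pi fun _ : Fin d => ν := hL.map_eq
    _ = (Measure.pi fun _ : Fin d => g).map (fun (x : Fin d → ℝ) (i : Fin d) => c * x i) :=
        hR.map_eq.symm
    _ = (Measure.pi fun _ : Fin d => g).map (fun x => c • x) := by
        congr 1

/-- The standard Gaussian measure on `EuclideanSpace ℝ (Fin d)`: the product of `d`
copies of the real Gaussian with mean `0` and variance `1`. -/
noncomputable def stdGaussian (d : ℕ) : Measure (EuclideanSpace ℝ (Fin d)) :=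
  (Measure.pi fun _ : Fin d => gaussianReal 0 1).map
    (MeasurableEquiv.toLp 2 (Fin d → ℝ))

lemma stdGaussian_linComb {d : ℕ} (a b c : ℝ) (h : a^2 + b^2 = c^2) :
    ((stdGaussian d).prod (stdGaussian d)).map
      (fun p : EuclideanSpace ℝ (Fin d) × EuclideanSpace ℝ (Fin d) => a • p.1 + b • p.2)
      = (stdGaussian d).map (fun x => c • x) := by
  set π' : Measure (Fin d → ℝ) := Measure.pi fun _ : Fin d => gaussianReal 0 1 with hπ
  set e := MeasurableEquiv.toLp 2 (Fin d → ℝ) with he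
  have hmf : Measurable (fun p : EuclideanSpace ℝ (Fin d) × EuclideanSpace ℝ (Fin d) =>
      a • p.1 + b • p.2) := (measurable_fst.const_smul a).add (measurable_snd.const_smul b)
  have hmfpi : Measurable (fun p : (Fin d → ℝ) × (Fin d → ℝ) => a • p.1 + b • p.2) :=
    (measurable_fst.const_smul a).add (measurable_snd.const_smul b)
  calc ((stdGaussian d).prod (stdGaussian d)).map
        (fun p : EuclideanSpace ℝ (Fin d) × EuclideanSpace ℝ (Fin d) => a • p.1 + b • p.2)
      = ((π'.prod π').map (Prod.map e e)).map
        (fun p : EuclideanSpace ℝ (Fin d) × EuclideanSpace ℝ (Fin d) => a • p.1 + b • p.2) := by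
        rw [_root_.stdGaussian, Measure.map_prod_map _ _ e.measurable e.measurable]
    _ = (π'.prod π').map ((fun p : EuclideanSpace ℝ (Fin d) × EuclideanSpace ℝ (Fin d) =>
          a • p.1 + b • p.2) ∘ (Prod.map e e)) :=
        Measure.map_map hmf (e.measurable.prodMap e.measurable)
    _ = (π'.prod π').map (e ∘ (fun p : (Fin d → ℝ) × (Fin d → ℝ) => a • p.1 + b • p.2)) := rfl
    _ = ((π'.prod π').map (fun p : (Fin d → ℝ) × (Fin d → ℝ) => a • p.1 + b • p.2)).map e :=
        (Measure.map_map e.measurable hmfpi).symm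
    _ = (π'.map (fun x : Fin d → ℝ => c • x)).map e := by rw [pi_linComb a b c h]
    _ = π'.map (e ∘ (fun x : Fin d → ℝ => c • x)) :=
        Measure.map_map e.measurable (measurable_id.const_smul c)
    _ = π'.map ((fun x : EuclideanSpace ℝ (Fin d) => c • x) ∘ e) := rfl
    _ = (π'.map e).map (fun x : EuclideanSpace ℝ (Fin d) => c • x) :=
        (Measure.map_map (measurable_id.const_smul c) e.measurable).symm
    _ = (stdGaussian d).map (fun x => c • x) := rfl

/-- Consistency of the DDPM forward marginals: composing one Gaussian forward diffusion step
`q(x_t|x_{t−1}) = N(√α x_{t−1}, (1−α)I)` with the marginal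
`q(x_{t−1}|x₀) = N(√ᾱ' x₀, (1−ᾱ')I)` yields the marginal
`q(x_t|x₀) = N(√(α·ᾱ') x₀, (1 − α·ᾱ')I)`. -/
theorem ddpm_forward_marginal_consistency
    {d : ℕ} {Ω : Type*} [MeasurableSpace Ω] (P : Measure Ω) [IsProbabilityMeasure P]
    (ε₁ ε₂ : Ω → EuclideanSpace ℝ (Fin d))
    (hmeas₁ : Measurable ε₁) (hmeas₂ : Measurable ε₂)
    (hindep : IndepFun ε₁ ε₂ P)
    (hlaw₁ : P.map ε₁ = stdGaussian d) (hlaw₂ : P.map ε₂ = stdGaussian d)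
    (α abar : ℝ) (hα : α ∈ Set.Icc (0:ℝ) 1) (habar : abar ∈ Set.Icc (0:ℝ) 1)
    (x₀ : EuclideanSpace ℝ (Fin d)) :
    P.map (fun ω => Real.sqrt α • (Real.sqrt abar • x₀ + Real.sqrt (1 - abar) • ε₁ ω)
        + Real.sqrt (1 - α) • ε₂ ω)
      = P.map (fun ω => Real.sqrt (α * abar) • x₀ + Real.sqrt (1 - α * abar) • ε₁ ω) := by
  obtain ⟨hα0, hα1⟩ := hα
  obtain ⟨habar0, habar1⟩ := habar
  set a := Real.sqrt α * Real.sqrt (1 - abar) with hadef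
  set b := Real.sqrt (1 - α) with hbdef
  set c := Real.sqrt (1 - α * abar) with hcdef
  set m := Real.sqrt (α * abar) • x₀ with hmdef
  have hsq : a^2 + b^2 = c^2 := by
    rw [hadef, hbdef, hcdef, mul_pow, Real.sq_sqrt hα0, Real.sq_sqrt (by linarith),
      Real.sq_sqrt (by linarith), Real.sq_sqrt (by nlinarith)]
    ring
  have hfL : (fun ω => Real.sqrt α • (Real.sqrt abar • x₀ + Real.sqrt (1 - abar) • ε₁ ω)
        + Real.sqrt (1 - α) • ε₂ ω)
      = (fun z : EuclideanSpace ℝ (Fin d) => m + z)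
        ∘ ((fun p : EuclideanSpace ℝ (Fin d) × EuclideanSpace ℝ (Fin d) => a • p.1 + b • p.2)
          ∘ (fun ω => (ε₁ ω, ε₂ ω))) := by
    funext ω
    simp only [Function.comp_apply, hmdef, hadef, hbdef]
    rw [smul_add, smul_smul, smul_smul, ← Real.sqrt_mul hα0, add_assoc]
  have hfR : (fun ω => Real.sqrt (α * abar) • x₀ + Real.sqrt (1 - α * abar) • ε₁ ω)
      = (fun z : EuclideanSpace ℝ (Fin d) => m + z)
        ∘ ((fun x : EuclideanSpace ℝ (Fin d) => c • x) ∘ ε₁) := rfl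
  have hmpair : Measurable (fun ω => (ε₁ ω, ε₂ ω)) := hmeas₁.prodMk hmeas₂
  have hmf : Measurable (fun p : EuclideanSpace ℝ (Fin d) × EuclideanSpace ℝ (Fin d) =>
      a • p.1 + b • p.2) := (measurable_fst.const_smul a).add (measurable_snd.const_smul b)
  have hmc : Measurable (fun x : EuclideanSpace ℝ (Fin d) => c • x) :=
    measurable_id.const_smul c
  have hpair : P.map (fun ω => (ε₁ ω, ε₂ ω)) = (stdGaussian d).prod (stdGaussian d) := by
    refine ((indepFun_iff_map_prod_eq_prod_map_map hmeas₁.aemeasurable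
      hmeas₂.aemeasurable).mp hindep).trans ?_
    rw [hlaw₁, hlaw₂]
  rw [hfL, hfR]
  rw [← Measure.map_map (measurable_const_add m) (hmf.comp hmpair),
    ← Measure.map_map (measurable_const_add m) (hmc.comp hmeas₁),
    ← Measure.map_map hmf hmpair, ← Measure.map_map hmc hmeas₁,
    hpair, hlaw₁]
  congr 1
  exact stdGaussian_linComb a b c hsq
end
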